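/- For any nonzero integers v1,...,vn, the maximum loneliness ML(v1,...,vn) is a rational number, and moreover the supremum in its definition is attained at some rational time t. -/

import Mathlib

/-- Distance from a real number to the nearest integer. -/
noncomputable def distToInt (x : ℝ) : ℝ := ⨅ m : ℤ, |x - m|

/-- Maximum loneliness of a tuple of speeds. -/
noncomputable def ML {n : ℕ} (v : Fin n → ℤ) : ℝ :=
  ⨆ t : ℝ, ⨅ i : Fin n, distToInt (t * v i)

lemma distToInt_eq_round (x : ℝ) : distToInt x = |x - round x| := by
  refine le_antisymm (ciInf_le ⟨0, ?_⟩ (round x)) (le_ciInf fun m => round_le x m)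
  rintro y ⟨m, rfl⟩; positivity

lemma distToInt_nonneg (x : ℝ) : 0 ≤ distToInt x := by
  rw [distToInt_eq_round]; positivity

lemma distToInt_le_half (x : ℝ) : distToInt x ≤ 1/2 := by
  rw [distToInt_eq_round]; exact abs_sub_round x

lemma distToInt_le (x : ℝ) (m : ℤ) : distToInt x ≤ |x - m| := by
  rw [distToInt_eq_round]; exact round_le x m

lemma distToInt_add_int (x : ℝ) (m : ℤ) : distToInt (x + m) = distToInt x := by
  rw [distToInt_eq_round, distToInt_eq_round, round_add_intCast]
  push_cast; ring_nf

lemma distToInt_lipschitz (x y : ℝ) : distToInt x ≤ distToInt y + |x - y| := by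
  calc distToInt x ≤ |x - round y| := distToInt_le x (round y)
    _ ≤ |y - round y| + |x - y| := by
        have h : x - (round y:ℝ) = (y - round y) + (x - y) := by ring
        rw [h]; exact abs_add_le _ _
    _ = distToInt y + |x - y| := by rw [distToInt_eq_round]

lemma distToInt_eq_of_le (x : ℝ) (m : ℤ) (h : |x - m| ≤ 1/2) : distToInt x = |x - m| := by
  refine le_antisymm (distToInt_le x m) ?_
  rw [distToInt_eq_round]
  rcases eq_or_ne (round x) m with rfl | hne
  · exact le_refl _
  · have h1 : (1:ℝ) ≤ |(m : ℝ) - round x| := by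
      rw [← Int.cast_sub, ← Int.cast_abs]
      exact_mod_cast Int.one_le_abs (sub_ne_zero.mpr (Ne.symm hne))
    have h2 : |(m:ℝ) - round x| ≤ |x - m| + |x - round x| := by
      have h : (m:ℝ) - round x = (x - round x) - (x - m) := by ring
      rw [h]
      exact (abs_sub _ _).trans (by rw [add_comm])
    have h3 := abs_sub_round x
    linarith

section G
variable {n : ℕ} (hn : 0 < n) (v : Fin n → ℤ)

/-- The minimum function. -/
noncomputable def gfun {n : ℕ} (v : Fin n → ℤ) (t : ℝ) : ℝ :=
  ⨅ i : Fin n, distToInt (t * v i)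

lemma gfun_attained {n : ℕ} (hn : 0 < n) (v : Fin n → ℤ) (t : ℝ) :
    ∃ j, gfun v t = distToInt (t * v j) ∧ ∀ i, distToInt (t * v j) ≤ distToInt (t * v i) := by
  have : Nonempty (Fin n) := ⟨⟨0, hn⟩⟩
  obtain ⟨j, hj⟩ := Finite.exists_min (fun i => distToInt (t * v i))
  refine ⟨j, le_antisymm (ciInf_le ⟨0, ?_⟩ j) (le_ciInf hj), hj⟩
  rintro y ⟨i, rfl⟩; exact distToInt_nonneg _

lemma gfun_le {n : ℕ} (v : Fin n → ℤ) (t : ℝ) (i : Fin n) :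
    gfun v t ≤ distToInt (t * v i) := by
  refine ciInf_le ⟨0, ?_⟩ i
  rintro y ⟨i, rfl⟩; exact distToInt_nonneg _

lemma le_gfun {n : ℕ} [Nonempty (Fin n)] (v : Fin n → ℤ) (t : ℝ) (c : ℝ)
    (h : ∀ i, c ≤ distToInt (t * v i)) : c ≤ gfun v t := le_ciInf h

lemma gfun_nonneg {n : ℕ} [Nonempty (Fin n)] (v : Fin n → ℤ) (t : ℝ) : 0 ≤ gfun v t :=
  le_gfun v t 0 fun i => distToInt_nonneg _

lemma gfun_add_int {n : ℕ} [Nonempty (Fin n)] (v : Fin n → ℤ) (t : ℝ) (k : ℤ) :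
    gfun v (t + k) = gfun v t := by
  unfold gfun
  congr 1; funext i
  have : (t + k) * v i = t * v i + (k * v i : ℤ) := by push_cast; ring
  rw [this, distToInt_add_int]

lemma gfun_continuous {n : ℕ} [Nonempty (Fin n)] (v : Fin n → ℤ) :
    Continuous (gfun v) := by
  have h : ∀ i : Fin n, Continuous (fun t => distToInt (t * v i)) := by
    intro i
    have : LipschitzWith 1 distToInt := by
      refine LipschitzWith.of_dist_le_mul fun x y => ?_
      rw [NNReal.coe_one, one_mul, Real.dist_eq, Real.dist_eq, abs_sub_le_iff]
      constructor
      · linarith [distToInt_lipschitz x y]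
      · linarith [distToInt_lipschitz y x, abs_sub_comm x y]
    exact this.continuous.comp (continuous_id.mul continuous_const)
  have hne := Finset.univ_nonempty (α := Fin n)
  have key : gfun v = fun t => Finset.univ.inf' hne (fun i => distToInt (t * v i)) := by
    funext t
    refine le_antisymm ?_ ?_
    · obtain ⟨j, -, hj⟩ := Finset.exists_mem_eq_inf' hne (fun i => distToInt (t * v i))
      rw [hj]; exact gfun_le v t j
    · exact le_gfun v t _ fun i => Finset.inf'_le _ (Finset.mem_univ i)
  rw [key]
  exact Continuous.finset_inf'_apply hne fun i _ => h i

end G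

lemma exists_max {n : ℕ} (hn : 0 < n) (v : Fin n → ℤ) :
    ∃ t₀ : ℝ, (∀ t, gfun v t ≤ gfun v t₀) ∧ ML v = gfun v t₀ := by
  have : Nonempty (Fin n) := ⟨⟨0, hn⟩⟩
  obtain ⟨t₀, -, ht₀⟩ := (isCompact_Icc (a := (0:ℝ)) (b := 1)).exists_isMaxOn
    (Set.nonempty_Icc.mpr zero_le_one) ((gfun_continuous v).continuousOn)
  have hmax : ∀ t, gfun v t ≤ gfun v t₀ := by
    intro t
    have h1 : gfun v t = gfun v (Int.fract t) := by
      have : t = Int.fract t + ⌊t⌋ := by rw [add_comm]; exact (Int.floor_add_fract t).symm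
      conv_lhs => rw [this]
      exact gfun_add_int v _ _
    rw [h1]
    exact ht₀ (Set.mem_Icc.mpr ⟨Int.fract_nonneg t, (Int.fract_lt_one t).le⟩)
  refine ⟨t₀, hmax, ?_⟩
  unfold ML
  have hble : BddAbove (Set.range fun t => ⨅ i : Fin n, distToInt (t * v i)) := by
    refine ⟨gfun v t₀, ?_⟩
    rintro y ⟨t, rfl⟩; exact hmax t
  exact le_antisymm (ciSup_le hmax) (le_ciSup hble t₀)

lemma exists_neg_active {n : ℕ} (hn : 0 < n) (v : Fin n → ℤ) (hv : ∀ i, v i ≠ 0)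
    (t₀ : ℝ) (hmax : ∀ t, gfun v t ≤ gfun v t₀)
    (hc0 : 0 < gfun v t₀) (hc2 : gfun v t₀ < 1/2) :
    ∃ i, distToInt (t₀ * v i) = gfun v t₀ ∧
      (t₀ * v i - round (t₀ * v i)) * v i < 0 := by
  classical
  have : Nonempty (Fin n) := ⟨⟨0, hn⟩⟩
  set c := gfun v t₀ with hc
  by_contra hcon
  push_neg at hcon
  -- every active index has positive slope
  have hpos : ∀ i, distToInt (t₀ * v i) = c →
      0 < (t₀ * v i - round (t₀ * v i)) * v i := by
    intro i hi
    have h1 := hcon i hi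
    have he : (t₀ * v i - round (t₀ * v i)) ≠ 0 := by
      intro h0
      rw [distToInt_eq_round, h0, abs_zero] at hi
      exact hc0.ne hi
    have hw : ((v i : ℝ)) ≠ 0 := Int.cast_ne_zero.mpr (hv i)
    exact lt_of_le_of_ne h1 (Ne.symm (mul_ne_zero he hw))
  have habs : ∀ i, |(v i : ℝ)| > 0 := fun i =>
    abs_pos.mpr (Int.cast_ne_zero.mpr (hv i))
  have hge : ∀ i, c ≤ distToInt (t₀ * v i) := fun i => gfun_le v t₀ i
  -- the bound function
  set b : Fin n → ℝ := fun i =>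
    if distToInt (t₀ * v i) = c then (1/2 - c)/|(v i : ℝ)|
    else (distToInt (t₀ * v i) - c)/|(v i : ℝ)| with hb
  have hbpos : ∀ i, 0 < b i := by
    intro i
    rw [hb]
    dsimp only
    split_ifs with h
    · exact div_pos (by linarith) (habs i)
    · exact div_pos (by have := hge i; cases this.lt_or_eq with
        | inl h' => linarith
        | inr h' => exact absurd h'.symm h) (habs i)
  have hne := Finset.univ_nonempty (α := Fin n)
  set ε : ℝ := (Finset.univ.inf' hne b) / 2 with hε
  obtain ⟨j₀, -, hj₀⟩ := Finset.exists_mem_eq_inf' hne b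
  have hεpos : 0 < ε := by rw [hε, hj₀]; exact half_pos (hbpos j₀)
  have hεlt : ∀ i, ε < b i := by
    intro i
    have h1 : Finset.univ.inf' hne b ≤ b i := Finset.inf'_le _ (Finset.mem_univ i)
    have := hbpos i
    rw [hε]; linarith
  -- each coordinate strictly exceeds c at t₀ + ε
  have hkey : ∀ i, c < distToInt ((t₀ + ε) * v i) := by
    intro i
    set w : ℝ := (v i : ℝ) with hwdef
    have hw : w ≠ 0 := Int.cast_ne_zero.mpr (hv i)
    by_cases hact : distToInt (t₀ * v i) = c
    · -- active case
      set e : ℝ := t₀ * v i - round (t₀ * v i) with hee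
      have heabs : |e| = c := by rw [hee, ← distToInt_eq_round]; exact hact
      have hew : 0 < e * w := hpos i hact
      have hsum : |e + ε * w| = c + ε * |w| := by
        rcases lt_trichotomy e 0 with h0 | h0 | h0
        · have hwneg : w < 0 := by
            rcases lt_trichotomy w 0 with h | h | h
            · exact h
            · exact absurd h hw
            · nlinarith
          have : e + ε * w < 0 := by nlinarith
          rw [abs_of_neg this, abs_of_neg hwneg, ← heabs, abs_of_neg h0]; ring
        · exfalso; rw [h0] at hew; simp at hew
        · have hwpos : 0 < w := by
            rcases lt_trichotomy w 0 with h | h | h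
            · nlinarith
            · exact absurd h hw
            · exact h
          have : 0 < e + ε * w := by positivity
          rw [abs_of_pos this, abs_of_pos hwpos, ← heabs, abs_of_pos h0]
      have hεw : ε * |w| < 1/2 - c := by
        have := hεlt i
        rw [hb] at this; simp only [hact, if_pos] at this
        calc ε * |w| < ((1/2 - c)/|w|) * |w| := by
              apply mul_lt_mul_of_pos_right _ (habs i); simpa using this
          _ = 1/2 - c := div_mul_cancel₀ _ (ne_of_gt (habs i))
      have hle : |(t₀ + ε) * w - (round (t₀ * v i) : ℤ)| ≤ 1/2 := by
        have : (t₀ + ε) * w - (round (t₀ * v i) : ℝ) = e + ε * w := by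
          rw [hee, hwdef]; ring
        rw [this, hsum]; linarith
      have := distToInt_eq_of_le ((t₀ + ε) * w) (round (t₀ * v i)) hle
      rw [this]
      have h3 : (t₀ + ε) * w - (round (t₀ * v i) : ℝ) = e + ε * w := by
        rw [hee, hwdef]; ring
      rw [h3, hsum]
      have := habs i
      nlinarith
    · -- inactive case
      have hlt : c < distToInt (t₀ * v i) := lt_of_le_of_ne (hge i) (Ne.symm hact)
      have hεw : ε * |w| < distToInt (t₀ * v i) - c := by
        have h1 := hεlt i
        rw [hb] at h1; simp only [hact, if_neg, if_false] at h1
        calc ε * |w| < ((distToInt (t₀ * v i) - c)/|w|) * |w| := by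
              apply mul_lt_mul_of_pos_right _ (habs i); simpa using h1
          _ = _ := div_mul_cancel₀ _ (ne_of_gt (habs i))
      have hlip := distToInt_lipschitz (t₀ * w) ((t₀ + ε) * w)
      have habsd : |t₀ * w - (t₀ + ε) * w| = ε * |w| := by
        have : t₀ * w - (t₀ + ε) * w = -(ε * w) := by ring
        rw [this, abs_neg, abs_mul, abs_of_pos hεpos]
      rw [habsd] at hlip
      have : distToInt (t₀ * v i) = distToInt (t₀ * w) := by rw [hwdef]
      linarith [hlip, this ▸ hεw]
  -- contradiction with maximality
  obtain ⟨j, hj, -⟩ := gfun_attained hn v (t₀ + ε)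
  have h1 := hmax (t₀ + ε)
  rw [hj] at h1
  exact absurd h1 (not_le.mpr (hkey j))

lemma distToInt_rat (q : ℚ) : distToInt (q : ℝ) = ((|q - round q| : ℚ) : ℝ) := by
  rw [distToInt_eq_round, Rat.round_cast]
  push_cast
  rfl

theorem ML_rational_and_attained (n : ℕ) (hn : 0 < n) (v : Fin n → ℤ)
    (hv : ∀ i, v i ≠ 0) :
    (∃ q : ℚ, ML v = (q : ℝ)) ∧
    (∃ t : ℚ, ML v = ⨅ i : Fin n, distToInt ((t : ℝ) * v i)) := by
  have hne : Nonempty (Fin n) := ⟨⟨0, hn⟩⟩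
  obtain ⟨t₀, hmax, hML⟩ := exists_max hn v
  -- main claim: t₀ can be taken rational
  have main : ∃ q : ℚ, ML v = gfun v (q : ℝ) := by
    rcases eq_or_lt_of_le (gfun_nonneg v t₀) with h0 | hc0
    · -- c = 0
      refine ⟨0, ?_⟩
      rw [hML, ← h0]
      have : gfun v ((0:ℚ) : ℝ) = 0 := by
        obtain ⟨j, hj, -⟩ := gfun_attained hn v ((0:ℚ) : ℝ)
        rw [hj]
        norm_num
        rw [distToInt_eq_round]
        norm_num
      rw [this]
    · -- c > 0
      obtain ⟨j, hj, -⟩ := gfun_attained hn v t₀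
      have hchalf : gfun v t₀ ≤ 1/2 := hj ▸ distToInt_le_half _
      set c := gfun v t₀ with hcdef
      rcases eq_or_lt_of_le hchalf with hhalf | hlt
      · -- c = 1/2 : single active index gives rationality of t₀
        have heabs : |t₀ * v j - round (t₀ * v j)| = c := by
          rw [← distToInt_eq_round]; exact hj.symm
        have hvj : ((v j : ℝ)) ≠ 0 := Int.cast_ne_zero.mpr (hv j)
        rcases (abs_eq hc0.le).mp heabs with he | he
        · refine ⟨((round (t₀ * v j) : ℚ) + 1/2) / (v j : ℚ), ?_⟩
          have ht : t₀ = ((((round (t₀ * v j) : ℚ) + 1/2) / (v j : ℚ) : ℚ) : ℝ) := by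
            push_cast
            rw [eq_div_iff hvj]
            rw [hhalf] at he
            linarith
          rw [hML, ← ht]
        · refine ⟨((round (t₀ * v j) : ℚ) - 1/2) / (v j : ℚ), ?_⟩
          have ht : t₀ = ((((round (t₀ * v j) : ℚ) - 1/2) / (v j : ℚ) : ℚ) : ℝ) := by
            push_cast
            rw [eq_div_iff hvj]
            rw [hhalf] at he
            linarith
          rw [hML, ← ht]
      · -- 0 < c < 1/2 : two active indices with opposite slopes
        obtain ⟨i, hi, hineg⟩ := exists_neg_active hn v hv t₀ hmax hc0 hlt
        -- apply to reflected family
        have hrefl : ∀ s : ℝ, gfun (fun k => -v k) s = gfun v (-s) := by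
          intro s
          unfold gfun
          congr 1; funext k
          congr 1
          push_cast; ring
        have hmax' : ∀ s, gfun (fun k => -v k) s ≤ gfun (fun k => -v k) (-t₀) := by
          intro s
          rw [hrefl, hrefl, neg_neg]
          exact hmax (-s)
        have hceq : gfun (fun k => -v k) (-t₀) = c := by rw [hrefl, neg_neg]
        obtain ⟨j', hj', hjneg⟩ := exists_neg_active hn (fun k => -v k)
          (fun k => neg_ne_zero.mpr (hv k)) (-t₀) hmax'
          (by rw [hceq]; exact hc0) (by rw [hceq]; exact hlt)
        -- translate back
        have harg : ∀ k : Fin n, (-t₀) * ((-v k : ℤ) : ℝ) = t₀ * v k := by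
          intro k; push_cast; ring
        rw [harg j'] at hj' hjneg
        rw [hceq] at hj'
        push_cast at hjneg
        have hjpos : 0 < (t₀ * v j' - round (t₀ * v j')) * (v j' : ℝ) := by nlinarith
        -- signs
        have hsig : ∀ k : Fin n, distToInt (t₀ * v k) = c →
            ∃ s : ℤ, (s = 1 ∨ s = -1) ∧ t₀ * v k - round (t₀ * v k) = s * c := by
          intro k hk
          have : |t₀ * v k - round (t₀ * v k)| = c := by
            rw [← distToInt_eq_round]; exact hk
          rcases (abs_eq hc0.le).mp this with h | h
          · exact ⟨1, Or.inl rfl, by rw [h]; push_cast; ring⟩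
          · exact ⟨-1, Or.inr rfl, by rw [h]; push_cast; ring⟩
        obtain ⟨si, hsi, hei⟩ := hsig i hi
        obtain ⟨sj, hsj, hej⟩ := hsig j' hj'
        have hsi2 : (si : ℝ) * si = 1 := by rcases hsi with h | h <;> rw [h] <;> norm_num
        have hsj2 : (sj : ℝ) * sj = 1 := by rcases hsj with h | h <;> rw [h] <;> norm_num
        -- s_i v_i < 0 < s_j v_j (real)
        have hsiv : (si : ℝ) * v i < 0 := by
          rw [hei] at hineg; nlinarith
        have hsjv : 0 < (sj : ℝ) * v j' := by
          rw [hej] at hjpos; nlinarith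
        obtain ⟨D, hD⟩ : ∃ D : ℤ, D = sj * v i - si * v j' := ⟨_, rfl⟩
        have hDne : (D : ℝ) ≠ 0 := by
          intro h
          rw [hD] at h; push_cast at h
          have : (sj : ℝ) * v i - si * v j' = 0 := by linarith
          have h2 : (si : ℝ) * si * ((sj : ℝ) * v i - si * v j') = 0 := by rw [this]; ring
          have h3 : (si:ℝ) * ((sj:ℝ) * ((si:ℝ)* v i - (sj:ℝ) * v j')) = 0 := by
            linear_combination ((sj:ℝ) * (v i : ℝ)) * hsi2 - ((si:ℝ) * (v j' : ℝ)) * hsj2 + this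
          have h4 : (si:ℝ) ≠ 0 := by rcases hsi with h | h <;> rw [h] <;> norm_num
          have h5 : (sj:ℝ) ≠ 0 := by rcases hsj with h | h <;> rw [h] <;> norm_num
          have h6 : (si:ℝ)* v i - (sj:ℝ) * v j' = 0 := by
            rcases mul_eq_zero.mp h3 with h' | h'
            · exact absurd h' h4
            · rcases mul_eq_zero.mp h' with h'' | h''
              · exact absurd h'' h5
              · exact h''
          nlinarith
        -- solve for t₀
        have heq1 : t₀ * v i = round (t₀ * v i) + si * c := by
          have := hei; linarith
        have heq2 : t₀ * v j' = round (t₀ * v j') + sj * c := by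
          have := hej; linarith
        have hsolve : t₀ * D = (sj * round (t₀ * v i) - si * round (t₀ * v j') : ℤ) := by
          push_cast [hD]
          linear_combination (sj:ℝ) * heq1 - (si:ℝ) * heq2
        refine ⟨((sj * round (t₀ * v i) - si * round (t₀ * v j') : ℤ) : ℚ) / (D : ℚ), ?_⟩
        have ht : t₀ = ((((sj * round (t₀ * v i) - si * round (t₀ * v j') : ℤ) : ℚ) / (D : ℚ) : ℚ) : ℝ) := by
          push_cast
          rw [eq_div_iff (by exact_mod_cast hDne)]
          exact_mod_cast hsolve
        rw [hML, ← ht]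
  -- conclude
  obtain ⟨q, hq⟩ := main
  constructor
  · obtain ⟨j, hj, -⟩ := gfun_attained hn v (q : ℝ)
    have harg : (q : ℝ) * v j = ((q * (v j : ℚ) : ℚ) : ℝ) := by push_cast; ring
    refine ⟨|q * (v j : ℚ) - round (q * (v j : ℚ))|, ?_⟩
    rw [hq, hj, harg, distToInt_rat]
  · exact ⟨q, hq⟩
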